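/- arXiv:2008.03793 — 2 statements merged into one kernel-verified Lean document; each statement's English description precedes it below -/
import Mathlib

section
/- For the Poincaré operator p² with base point the origin, defined on vector fields on ℝ³ by (p²u)(x) = ∫₀¹ u(tx) × (tx) dt: if each component of u is a polynomial of degree at most r, then each component of p²u is a polynomial of degree at most r+1. -/
open scoped BigOperators
open MeasureTheory

/-- Vectors in ℝ³. -/
abbrev V3 : Type := Fin 3 → ℝ

/-- Partial derivative of a scalar function in direction `i`. -/
noncomputable def pd (f : V3 → ℝ) (i : Fin 3) (x : V3) : ℝ :=
  fderiv ℝ f x (Pi.single i 1)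

/-- Gradient. -/
noncomputable def grad (f : V3 → ℝ) (x : V3) : V3 := fun i => pd f i x

/-- Euclidean dot product. -/
def dot (a b : V3) : ℝ := ∑ i, a i * b i

/-- Cross product in ℝ³. -/
def cross (a b : V3) : V3 :=
  ![a 1 * b 2 - a 2 * b 1, a 2 * b 0 - a 0 * b 2, a 0 * b 1 - a 1 * b 0]

/-- Curl in ℝ³. -/
noncomputable def curl (u : V3 → V3) (x : V3) : V3 :=
  ![pd (fun y => u y 2) 1 x - pd (fun y => u y 1) 2 x,
    pd (fun y => u y 0) 2 x - pd (fun y => u y 2) 0 x,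
    pd (fun y => u y 1) 0 x - pd (fun y => u y 0) 1 x]

/-- Divergence in ℝ³. -/
noncomputable def div3 (u : V3 → V3) (x : V3) : ℝ := ∑ i, pd (fun y => u y i) i x

/-- Poincaré operator `p¹` (1-forms to 0-forms), base point the origin. -/
noncomputable def poin1 (u : V3 → V3) (x : V3) : ℝ :=
  ∫ t in (0:ℝ)..1, dot (u (t • x)) x

/-- Poincaré operator `p²` (2-forms to 1-forms), base point the origin. -/
noncomputable def poin2 (u : V3 → V3) (x : V3) : V3 :=
  ∫ t in (0:ℝ)..1, cross (u (t • x)) (t • x)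

/-- Poincaré operator `p³` (3-forms to 2-forms), base point the origin. -/
noncomputable def poin3 (q : V3 → ℝ) (x : V3) : V3 :=
  ∫ t in (0:ℝ)..1, (t ^ 2 * q (t • x)) • x

open MvPolynomial
noncomputable def Jp (P : MvPolynomial (Fin 3) ℝ) : MvPolynomial (Fin 3) ℝ :=
  ∑ d ∈ P.support,
    MvPolynomial.monomial d (P.coeff d / (((d.sum fun _ e => e : ℕ) : ℝ) + 2))

lemma Jp_totalDegree (P : MvPolynomial (Fin 3) ℝ) : (Jp P).totalDegree ≤ P.totalDegree := by
  refine (MvPolynomial.totalDegree_finset_sum _ _).trans (Finset.sup_le fun d hd => ?_)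
  exact (MvPolynomial.totalDegree_monomial_le _ _).trans (MvPolynomial.le_totalDegree hd)

lemma integrand_eq (P : MvPolynomial (Fin 3) ℝ) (x : V3) (t : ℝ) :
    t * MvPolynomial.eval (t • x) P
      = ∑ d ∈ P.support, P.coeff d * t ^ ((d.sum fun _ e => e) + 1)
          * ∏ i ∈ d.support, x i ^ d i := by
  rw [MvPolynomial.eval_eq, Finset.mul_sum]
  refine Finset.sum_congr rfl fun d _ => ?_
  have h : ∀ i ∈ d.support, (t • x) i ^ d i = t ^ d i * x i ^ d i := by
    intro i _; simp [mul_pow]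
  rw [Finset.prod_congr rfl h, Finset.prod_mul_distrib, Finset.prod_pow_eq_pow_sum]
  have : (d.sum fun _ e => e) = ∑ i ∈ d.support, d i := rfl
  rw [this, pow_succ]
  ring

lemma Jp_eval (P : MvPolynomial (Fin 3) ℝ) (x : V3) :
    ∫ t in (0:ℝ)..1, t * MvPolynomial.eval (t • x) P = MvPolynomial.eval x (Jp P) := by
  simp only [integrand_eq]
  rw [intervalIntegral.integral_finset_sum (fun d _ => (Continuous.intervalIntegrable (by fun_prop) _ _))]
  unfold Jp
  rw [map_sum]
  refine Finset.sum_congr rfl fun d _ => ?_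
  rw [MvPolynomial.eval_monomial]
  set n := (d.sum fun _ e => e) with hn
  have h1 : (∫ t in (0:ℝ)..1, P.coeff d * t ^ (n + 1) * ∏ i ∈ d.support, x i ^ d i)
      = (P.coeff d * ∏ i ∈ d.support, x i ^ d i) * ∫ t in (0:ℝ)..1, t ^ (n + 1) := by
    rw [← intervalIntegral.integral_const_mul]
    refine intervalIntegral.integral_congr fun t _ => ?_
    ring
  have h2 : Finsupp.prod d (fun i e => x i ^ e) = ∏ i ∈ d.support, x i ^ d i := rfl
  have h3 : ((n : ℝ) + 2) ≠ 0 := by positivity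
  rw [h1, integral_pow, h2]
  have h4 : ((1:ℝ) ^ (n+1+1) - 0 ^ (n+1+1)) = 1 := by norm_num
  rw [h4]
  push_cast
  rw [show ((n:ℝ)+1+1) = (n:ℝ)+2 by ring]
  field_simp

lemma cross_cont (u : V3 → V3) (P : Fin 3 → MvPolynomial (Fin 3) ℝ)
    (hu : ∀ x i, u x i = MvPolynomial.eval x (P i)) (x : V3) :
    Continuous fun t : ℝ => cross (u (t • x)) (t • x) := by
  have hc : ∀ j : Fin 3, Continuous fun t : ℝ => u (t • x) j := by
    intro j
    simp only [hu]
    exact (MvPolynomial.continuous_eval _).comp (by fun_prop)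
  have hx : ∀ j : Fin 3, Continuous fun t : ℝ => (t • x) j := by
    intro j; simp only [Pi.smul_apply, smul_eq_mul]; fun_prop
  unfold cross
  refine continuous_pi fun i => ?_
  fin_cases i <;> simp <;>
    exact ((hc _).mul (hx _)).sub ((hc _).mul (hx _))

lemma key (P₁ P₂ : MvPolynomial (Fin 3) ℝ) (x : V3) (j k : Fin 3) :
    (∫ t in (0:ℝ)..1, (MvPolynomial.eval (t • x) P₁ * (t * x j)
        - MvPolynomial.eval (t • x) P₂ * (t * x k)))
      = MvPolynomial.eval x (Jp P₁ * MvPolynomial.X j - Jp P₂ * MvPolynomial.X k) := by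
  have hcont : ∀ Q : MvPolynomial (Fin 3) ℝ, Continuous fun t : ℝ => MvPolynomial.eval (t • x) Q :=
    fun Q => (MvPolynomial.continuous_eval _).comp (by fun_prop)
  have h1 : ∀ (Q : MvPolynomial (Fin 3) ℝ) (m : Fin 3),
      (∫ t in (0:ℝ)..1, MvPolynomial.eval (t • x) Q * (t * x m))
        = MvPolynomial.eval x (Jp Q) * x m := by
    intro Q m
    have he : (∫ t in (0:ℝ)..1, MvPolynomial.eval (t • x) Q * (t * x m))
        = ∫ t in (0:ℝ)..1, (t * MvPolynomial.eval (t • x) Q) * x m := by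
      refine intervalIntegral.integral_congr fun t _ => ?_; ring
    rw [he, intervalIntegral.integral_mul_const, Jp_eval]
  rw [intervalIntegral.integral_sub
    (Continuous.intervalIntegrable (u := fun t => MvPolynomial.eval (t • x) P₁ * (t * x j)) (((hcont P₁).mul (by fun_prop))) _ _)
    (Continuous.intervalIntegrable (u := fun t => MvPolynomial.eval (t • x) P₂ * (t * x k)) (((hcont P₂).mul (by fun_prop))) _ _), h1, h1]
  simp [MvPolynomial.eval_X]

/-- p² maps vector fields with polynomial components of degree ≤ r
to vector fields with polynomial components of degree ≤ r+1. -/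
theorem poin2_polynomial (r : ℕ) (P : Fin 3 → MvPolynomial (Fin 3) ℝ)
    (hP : ∀ i, (P i).totalDegree ≤ r)
    (u : V3 → V3) (hu : ∀ x i, u x i = MvPolynomial.eval x (P i)) :
    ∃ Q : Fin 3 → MvPolynomial (Fin 3) ℝ,
      (∀ i, (Q i).totalDegree ≤ r + 1) ∧
        ∀ x i, poin2 u x i = MvPolynomial.eval x (Q i) := by
  refine ⟨![Jp (P 1) * X 2 - Jp (P 2) * X 1,
            Jp (P 2) * X 0 - Jp (P 0) * X 2,
            Jp (P 0) * X 1 - Jp (P 1) * X 0], ?_, ?_⟩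
  · intro i
    have hdeg : ∀ j k : Fin 3, (Jp (P j) * X k).totalDegree ≤ r + 1 := fun j k =>
      (MvPolynomial.totalDegree_mul _ _).trans
        (add_le_add ((Jp_totalDegree _).trans (hP j)) (MvPolynomial.totalDegree_X k).le)
    fin_cases i <;>
      exact (MvPolynomial.totalDegree_sub _ _).trans (max_le (hdeg _ _) (hdeg _ _))
  · intro x i
    have hI : IntervalIntegrable (fun t : ℝ => cross (u (t • x)) (t • x))
        MeasureTheory.volume 0 1 := (cross_cont u P hu x).intervalIntegrable _ _
    have hproj : poin2 u x i
        = ∫ t in (0:ℝ)..1, cross (u (t • x)) (t • x) i := by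
      have := (ContinuousLinearMap.proj (R := ℝ) (φ := fun _ : Fin 3 => ℝ) i
        ).intervalIntegral_comp_comm hI
      simpa [poin2, ContinuousLinearMap.proj_apply] using this.symm
    rw [hproj]
    fin_cases i <;>
      · simp only [cross, hu, Matrix.cons_val_zero, Matrix.cons_val_one, Matrix.head_cons,
          Matrix.cons_val_two, Matrix.tail_cons, Pi.smul_apply, smul_eq_mul, Fin.isValue]
        exact key _ _ _ _ _
end

section
/- Under the affine map F(x̂) = B x̂ + b with B invertible, if u ∘ F = B^{-T} û (covariant Piola transform), then (∇×u) ∘ F = (1/det B) B (∇̂×û), i.e., the curl transforms by the contravariant Piola transform. -/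
open scoped BigOperators
open MeasureTheory

noncomputable def mcPiola (M : Matrix (Fin 3) (Fin 3) ℝ) : V3 →L[ℝ] V3 :=
  LinearMap.toContinuousLinearMap M.mulVecLin

set_option maxHeartbeats 1000000

/-- under the affine map F(x̂) = Bx̂ + b with the covariant Piola
transform u ∘ F = B⁻ᵀ û, the curl transforms contravariantly:
(∇×u) ∘ F = (1/det B) B (∇̂×û). -/
theorem curl_piola_transform (B : Matrix (Fin 3) (Fin 3) ℝ) (hB : IsUnit B.det)
    (b : V3) (F : V3 → V3) (hF : ∀ xh, F xh = B.mulVec xh + b)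
    (uh : V3 → V3) (huh : ContDiff ℝ 1 uh)
    (u : V3 → V3) (hu : ∀ xh, u (F xh) = (B.transpose)⁻¹.mulVec (uh xh)) :
    ∀ xh, curl u (F xh) = (B.det)⁻¹ • B.mulVec (curl uh xh) := by
  intro xh
  classical
  have hdet0 : B.det ≠ 0 := hB.ne_zero
  set A : Matrix (Fin 3) (Fin 3) ℝ := B⁻¹ with hAdef
  have hBA : B * A = 1 := Matrix.mul_nonsing_inv B hB
  have hC : (B.transpose)⁻¹ = A.transpose := by
    rw [hAdef, Matrix.transpose_nonsing_inv]
  have hueq : ∀ y, u y = A.transpose.mulVec (uh (A.mulVec (y - b))) := by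
    intro y
    have h1 : F (A.mulVec (y - b)) = y := by
      rw [hF, Matrix.mulVec_mulVec, hBA, Matrix.one_mulVec, sub_add_cancel]
    calc u y = u (F (A.mulVec (y - b))) := by rw [h1]
    _ = (B.transpose)⁻¹.mulVec (uh (A.mulVec (y - b))) := hu _
    _ = _ := by rw [hC]
  have hd : Differentiable ℝ uh := huh.differentiable one_ne_zero
  set L : V3 →L[ℝ] V3 := fderiv ℝ uh xh with hL
  have hg : HasFDerivAt (fun z => A.mulVec (z - b)) (mcPiola A) (F xh) := by
    have heq : (fun z : V3 => A.mulVec (z - b)) = fun z => (mcPiola A) z - A.mulVec b := by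
      funext z; simp [mcPiola, Matrix.mulVec_sub]
    rw [heq]
    exact ((mcPiola A).hasFDerivAt).sub_const _
  have hgx : A.mulVec (F xh - b) = xh := by
    rw [hF, add_sub_cancel_right, Matrix.mulVec_mulVec]
    rw [hAdef, Matrix.nonsing_inv_mul B hB, Matrix.one_mulVec]
  have huD : HasFDerivAt u ((mcPiola A.transpose).comp (L.comp (mcPiola A))) (F xh) := by
    have h2' : HasFDerivAt uh L (A.mulVec (F xh - b)) := by
      rw [hgx]; exact (hd xh).hasFDerivAt
    have h3 := ((mcPiola A.transpose).hasFDerivAt).comp (F xh) (h2'.comp (F xh) hg)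
    exact h3.congr_of_eventuallyEq (Filter.Eventually.of_forall fun y => by
      simp [hueq y, mcPiola, Function.comp, Matrix.mulVec_transpose])
  have hpd : ∀ i j, pd (fun y => u y i) j (F xh)
      = A.transpose.mulVec (L (A.mulVec (Pi.single j 1))) i := by
    intro i j
    have h := (ContinuousLinearMap.proj (R := ℝ) (φ := fun _ : Fin 3 => ℝ) i).hasFDerivAt.comp
      (F xh) huD
    have h2 : HasFDerivAt (fun y => u y i)
        (((ContinuousLinearMap.proj (R := ℝ) (φ := fun _ : Fin 3 => ℝ) i)).comp
            ((mcPiola A.transpose).comp (L.comp (mcPiola A)))) (F xh) := h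
    unfold pd
    rw [h2.fderiv]
    simp [mcPiola, Matrix.mulVec_transpose]
  have hDk : ∀ k m, pd (fun y => uh y k) m xh = L (Pi.single m 1) k := by
    intro k m
    have h := (ContinuousLinearMap.proj (R := ℝ) (φ := fun _ : Fin 3 => ℝ) k).hasFDerivAt.comp
      xh (hd xh).hasFDerivAt
    have h2 : HasFDerivAt (fun y => uh y k)
        ((ContinuousLinearMap.proj (R := ℝ) (φ := fun _ : Fin 3 => ℝ) k).comp L) xh := h
    unfold pd
    rw [h2.fderiv]
    rfl
  -- column expansion
  have hcol : ∀ j : Fin 3, A.mulVec (Pi.single j 1)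
      = A 0 j • (Pi.single 0 1 : V3) + A 1 j • (Pi.single 1 1 : V3)
        + A 2 j • (Pi.single 2 1 : V3) := by
    intro j
    funext m
    fin_cases m <;> simp [Matrix.mulVec_single]
  have hLcol : ∀ j k : Fin 3, L (A.mulVec (Pi.single j 1)) k
      = A 0 j * L (Pi.single 0 1) k + A 1 j * L (Pi.single 1 1) k
        + A 2 j * L (Pi.single 2 1) k := by
    intro j k
    rw [hcol j]
    simp [Pi.add_apply]
  have hBadj : (B.det)⁻¹ • B = A.adjugate := by
    have h1 : A⁻¹ = B := Matrix.nonsing_inv_nonsing_inv B hB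
    have h2 : A.det = (B.det)⁻¹ := by
      rw [hAdef, Matrix.det_nonsing_inv, Ring.inverse_eq_inv']
    have h4 : A.det • A⁻¹ = A.adjugate := by
      rw [Matrix.inv_def, Ring.inverse_eq_inv', smul_smul, mul_inv_cancel₀, one_smul]
      rw [h2]; exact inv_ne_zero hdet0
    rw [← h4, h2, h1]
  have hRW : (B.det)⁻¹ • B.mulVec (curl uh xh) = (A.adjugate).mulVec (curl uh xh) := by
    rw [← Matrix.smul_mulVec, hBadj]
  rw [hRW]
  funext a
  have e00 := hpd 0 0; have e01 := hpd 0 1; have e02 := hpd 0 2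
  have e10 := hpd 1 0; have e11 := hpd 1 1; have e12 := hpd 1 2
  have e20 := hpd 2 0; have e21 := hpd 2 1; have e22 := hpd 2 2
  fin_cases a <;>
  · simp only [Fin.zero_eta, Fin.mk_one, Fin.reduceFinMk, Fin.isValue,
      curl, Matrix.cons_val_zero, Matrix.cons_val_one, Matrix.head_cons,
      Matrix.cons_val_two, Matrix.tail_cons, Matrix.adjugate_fin_three,
      Matrix.mulVec, dotProduct, Fin.sum_univ_three,
      e00, e01, e02, e10, e11, e12, e20, e21, e22, hDk,
      Matrix.transpose_apply, Matrix.of_apply]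
    simp only [hLcol, Matrix.mulVec, dotProduct, Fin.sum_univ_three,
      Matrix.transpose_apply]
    ring
end
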